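/- In any graph with all vertex degrees at most d, the number of subtrees of size u containing a specified vertex v (i.e., connected induced-subtree vertex sets of size u rooted at v, counted as subtrees of the graph containing v) is at most (e·d)^{u-1}. -/

import Mathlib

set_option linter.unusedSectionVars false

open List

lemma numeric_bound (d m : ℕ) : (((d*m).choose m : ℕ) : ℝ) ≤ (Real.exp 1 * d)^m := by
  have h1 : ((d*m).choose m) * m.factorial ≤ (d*m)^m := by
    calc ((d*m).choose m) * m.factorial = (d*m).descFactorial m := by
          rw [Nat.descFactorial_eq_factorial_mul_choose]; ring
      _ ≤ (d*m)^m := Nat.descFactorial_le_pow _ _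
  have hf : (0:ℝ) < (m.factorial : ℝ) := by exact_mod_cast m.factorial_pos
  have h2 : (((d*m).choose m : ℕ) : ℝ) ≤ ((d*m)^m : ℝ) / m.factorial := by
    rw [le_div_iff₀ hf]
    exact_mod_cast h1
  have h3 : ((m:ℝ))^m / m.factorial ≤ Real.exp m :=
    Real.pow_div_factorial_le_exp (x := (m:ℝ)) (by positivity) m
  calc (((d*m).choose m : ℕ) : ℝ) ≤ ((d*m)^m : ℝ) / m.factorial := h2
    _ = (d:ℝ)^m * ((m:ℝ)^m / m.factorial) := by ring
    _ ≤ (d:ℝ)^m * Real.exp m := by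
        exact mul_le_mul_of_nonneg_left h3 (by positivity)
    _ = (Real.exp 1 * d)^m := by
        rw [mul_pow, ← Real.exp_nat_mul]
        ring_nf


section enc

variable {V : Type*} [Fintype V] [LinearOrder V]

/-- sorted list of neighbors -/
def nbrs (G : SimpleGraph V) [DecidableRel G.Adj] (w : V) : List V :=
  (G.neighborFinset w).sort (· ≤ ·)

lemma mem_nbrs (G : SimpleGraph V) [DecidableRel G.Adj] {w x : V} :
    x ∈ nbrs G w ↔ G.Adj w x := by
  simp [nbrs]

lemma length_nbrs (G : SimpleGraph V) [DecidableRel G.Adj] (w : V) :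
    (nbrs G w).length = G.degree w := by
  rw [nbrs, Finset.length_sort]; rfl

/-- position of first neighbor of `x` in `l` -/
def pp (G : SimpleGraph V) [DecidableRel G.Adj] (l : List V) (x : V) : ℕ :=
  l.findIdx (fun y => decide (G.Adj y x))

/-- key encoding: parent position and index among parent's neighbors -/
def key (G : SimpleGraph V) [DecidableRel G.Adj] (d : ℕ) (l : List V) (x : V) : ℕ :=
  pp G l x * d + (nbrs G (l.getD (pp G l x) x)).idxOf x

lemma pp_lt (G : SimpleGraph V) [DecidableRel G.Adj] {l : List V} {x : V}
    (h : ∃ y ∈ l, G.Adj y x) : pp G l x < l.length := by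
  apply List.findIdx_lt_length_of_exists
  simpa using h

lemma adj_parent (G : SimpleGraph V) [DecidableRel G.Adj] {l : List V} {x : V}
    (h : ∃ y ∈ l, G.Adj y x) : G.Adj (l.getD (pp G l x) x) x := by
  have hlt := pp_lt G h
  rw [List.getD_eq_getElem _ _ hlt]
  have := List.findIdx_getElem (p := fun y => decide (G.Adj y x)) (xs := l) (w := hlt)
  exact of_decide_eq_true this

lemma idx_lt (G : SimpleGraph V) [DecidableRel G.Adj] {d : ℕ} (hd : ∀ w, G.degree w ≤ d)
    {l : List V} {x : V} (h : ∃ y ∈ l, G.Adj y x) :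
    (nbrs G (l.getD (pp G l x) x)).idxOf x < d := by
  have hadj := adj_parent G h
  have hx : x ∈ nbrs G (l.getD (pp G l x) x) := (mem_nbrs G).2 hadj
  have := List.idxOf_lt_length_iff.2 hx
  calc (nbrs G (l.getD (pp G l x) x)).idxOf x
      < (nbrs G (l.getD (pp G l x) x)).length := this
    _ = G.degree _ := length_nbrs G _
    _ ≤ d := hd _

lemma key_inj (G : SimpleGraph V) [DecidableRel G.Adj] {d : ℕ} (hd : ∀ w, G.degree w ≤ d)
    {l : List V} {x₁ x₂ : V} (h₁ : ∃ y ∈ l, G.Adj y x₁) (h₂ : ∃ y ∈ l, G.Adj y x₂)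
    (hk : key G d l x₁ = key G d l x₂) : x₁ = x₂ := by
  have k₁lt := idx_lt G hd h₁
  have k₂lt := idx_lt G hd h₂
  have hd0 : 0 < d := lt_of_le_of_lt (Nat.zero_le _) k₁lt
  have hdiv : pp G l x₁ = pp G l x₂ := by
    have e₁ : key G d l x₁ / d = pp G l x₁ := by
      rw [key, mul_comm, Nat.mul_add_div hd0, Nat.div_eq_of_lt k₁lt, add_zero]
    have e₂ : key G d l x₂ / d = pp G l x₂ := by
      rw [key, mul_comm, Nat.mul_add_div hd0, Nat.div_eq_of_lt k₂lt, add_zero]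
    rw [← e₁, ← e₂, hk]
  have hmod : (nbrs G (l.getD (pp G l x₁) x₁)).idxOf x₁
      = (nbrs G (l.getD (pp G l x₂) x₂)).idxOf x₂ := by
    have e₁ : key G d l x₁ % d = (nbrs G (l.getD (pp G l x₁) x₁)).idxOf x₁ := by
      rw [key, add_comm, Nat.add_mul_mod_self_right, Nat.mod_eq_of_lt k₁lt]
    have e₂ : key G d l x₂ % d = (nbrs G (l.getD (pp G l x₂) x₂)).idxOf x₂ := by
      rw [key, add_comm, Nat.add_mul_mod_self_right, Nat.mod_eq_of_lt k₂lt]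
    rw [← e₁, ← e₂, hk]
  have hlt₁ := pp_lt G h₁
  have hparent : l.getD (pp G l x₁) x₁ = l.getD (pp G l x₂) x₂ := by
    rw [hdiv] at hlt₁ ⊢
    rw [List.getD_eq_getElem _ _ hlt₁, List.getD_eq_getElem _ _ hlt₁]
  rw [hparent] at hmod
  have hx₁ : x₁ ∈ nbrs G (l.getD (pp G l x₂) x₂) := by
    rw [← hparent]; exact (mem_nbrs G).2 (adj_parent G h₁)
  have hx₂ : x₂ ∈ nbrs G (l.getD (pp G l x₂) x₂) := (mem_nbrs G).2 (adj_parent G h₂)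
  exact (List.idxOf_inj hx₁).1 hmod

lemma pp_append (G : SimpleGraph V) [DecidableRel G.Adj] {l : List V} (l' : List V) {x : V}
    (h : ∃ y ∈ l, G.Adj y x) : pp G (l ++ l') x = pp G l x := by
  rw [pp, List.findIdx_append, if_pos]
  · rfl
  · exact pp_lt G h

lemma key_append (G : SimpleGraph V) [DecidableRel G.Adj] (d : ℕ) {l : List V} (l' : List V) {x : V}
    (h : ∃ y ∈ l, G.Adj y x) : key G d (l ++ l') x = key G d l x := by
  have hlt := pp_lt G h
  rw [key, key, pp_append G l' h, List.getD_append _ _ _ _ hlt]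

variable (G : SimpleGraph V) [DecidableRel G.Adj] (d : ℕ) (v : V) (S : Finset V)

/-- candidates for the next vertex -/
def cand (l : List V) : Finset V :=
  (S \ l.toFinset).filter (fun x => ∃ y ∈ l, G.Adj y x)

lemma mem_cand {l : List V} {x : V} :
    x ∈ cand G S l ↔ x ∈ S ∧ x ∉ l.toFinset ∧ ∃ y ∈ l, G.Adj y x := by
  simp [cand, Finset.mem_filter, Finset.mem_sdiff, and_assoc]

noncomputable def nxt (l : List V) : V :=
  if h : (cand G S l).Nonempty then
    (Finset.exists_min_image (cand G S l) (key G d l) h).choose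
  else v

lemma nxt_spec {l : List V} (h : (cand G S l).Nonempty) :
    nxt G d v S l ∈ cand G S l ∧ ∀ x ∈ cand G S l, key G d l (nxt G d v S l) ≤ key G d l x := by
  rw [nxt, dif_pos h]
  exact (Finset.exists_min_image (cand G S l) (key G d l) h).choose_spec

noncomputable def seq : ℕ → List V
  | 0 => [v]
  | n + 1 => seq n ++ [nxt G d v S (seq n)]

lemma length_seq (n : ℕ) : (seq G d v S n).length = n + 1 := by
  induction n with
  | zero => rfl
  | succ n ih => simp [seq, ih]

end enc
section enc2
variable {V : Type*} [Fintype V] [LinearOrder V] (G : SimpleGraph V) [DecidableRel G.Adj]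

lemma crossing {S : Finset V} (T : Finset V) :
    ∀ {a b : (S : Set V)}, (G.induce (S : Set V)).Walk a b → ↑a ∈ T → ↑b ∉ T →
      ∃ x ∈ S, x ∉ T ∧ ∃ y ∈ T, G.Adj y x := by
  intro a b w
  induction w with
  | nil => intro ha hb; exact absurd ha hb
  | @cons p q r h _ ih =>
    intro ha hb
    by_cases hq : (q : V) ∈ T
    · exact ih hq hb
    · refine ⟨q, q.2, hq, ⟨p, ha, ?_⟩⟩
      exact h

variable (d : ℕ) (v : V) (S : Finset V)

lemma cand_nonempty (hv : v ∈ S) (hconn : (G.induce (S : Set V)).Connected)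
    {l : List V} (hvl : v ∈ l.toFinset) (hsub : l.toFinset ⊆ S) (hne : l.toFinset ≠ S) :
    (cand G S l).Nonempty := by
  obtain ⟨z, hzS, hzl⟩ := Finset.exists_of_ssubset (lt_of_le_of_ne hsub hne)
  obtain ⟨w⟩ := hconn.preconnected ⟨v, hv⟩ ⟨z, hzS⟩
  obtain ⟨x, hxS, hxT, y, hyT, hadj⟩ := crossing G l.toFinset w hvl hzl
  exact ⟨x, (mem_cand G S).2 ⟨hxS, hxT, y, by simpa using hyT, hadj⟩⟩

structure SeqInv (n : ℕ) : Prop where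
  nodup : (seq G d v S n).Nodup
  subset : (seq G d v S n).toFinset ⊆ S
  memv : v ∈ (seq G d v S n).toFinset

lemma seq_invariant (hv : v ∈ S) (hconn : (G.induce (S : Set V)).Connected) :
    ∀ n, n + 1 ≤ S.card → SeqInv G d v S n := by
  intro n
  induction n with
  | zero =>
    intro _
    exact ⟨by simp [seq], by simp [seq, hv], by simp [seq]⟩
  | succ n ih =>
    intro hcard
    have ihn := ih (by omega)
    have hne : (seq G d v S n).toFinset ≠ S := by
      intro h
      have : (seq G d v S n).toFinset.card = n + 1 := by
        rw [List.card_toFinset, ihn.nodup.dedup, length_seq]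
      rw [h] at this
      omega
    have hcandne := cand_nonempty G v S hv hconn ihn.memv ihn.subset hne
    have hnxt := (nxt_spec G d v S hcandne).1
    rw [mem_cand] at hnxt
    constructor
    · show (seq G d v S n ++ [nxt G d v S (seq G d v S n)]).Nodup
      refine List.Nodup.append ihn.nodup (List.nodup_singleton _) ?_
      intro a ha hb
      rw [List.mem_singleton] at hb
      subst hb
      exact hnxt.2.1 (List.mem_toFinset.2 ha)
    · show (seq G d v S n ++ _).toFinset ⊆ S
      simp only [List.toFinset_append]
      refine Finset.union_subset ihn.subset ?_
      simpa using hnxt.1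
    · show v ∈ (seq G d v S n ++ _).toFinset
      simp only [List.toFinset_append, Finset.mem_union]
      exact Or.inl ihn.memv

end enc2
section enc3
variable {V : Type*} [Fintype V] [LinearOrder V] (G : SimpleGraph V) [DecidableRel G.Adj]
  (d : ℕ) (v : V) (S : Finset V)

noncomputable def kseq (n : ℕ) : ℕ :=
  key G d (seq G d v S n) (nxt G d v S (seq G d v S n))

variable {G d v S}

variable (hv : v ∈ S) (hconn : (G.induce (S : Set V)).Connected)
  (hd : ∀ w, G.degree w ≤ d)

include hv hconn

lemma cand_seq {n : ℕ} (h : n + 2 ≤ S.card) : (cand G S (seq G d v S n)).Nonempty := by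
  have inv := seq_invariant G d v S hv hconn n (by omega)
  refine cand_nonempty G v S hv hconn inv.memv inv.subset ?_
  intro heq
  have : (seq G d v S n).toFinset.card = n + 1 := by
    rw [List.card_toFinset, inv.nodup.dedup, length_seq]
  rw [heq] at this
  omega

lemma nxt_adj {n : ℕ} (h : n + 2 ≤ S.card) :
    ∃ y ∈ seq G d v S n, G.Adj y (nxt G d v S (seq G d v S n)) := by
  have := (nxt_spec G d v S (cand_seq (d := d) hv hconn h)).1
  exact ((mem_cand G S).1 this).2.2

include hd

lemma kseq_succ {n : ℕ} (h : n + 3 ≤ S.card) : kseq G d v S n < kseq G d v S (n + 1) := by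
  set l := seq G d v S n with hl
  set w := nxt G d v S l with hw
  have hl' : seq G d v S (n + 1) = l ++ [w] := rfl
  set s := nxt G d v S (l ++ [w]) with hs
  have h1 : (cand G S l).Nonempty := cand_seq (d := d) hv hconn (by omega)
  have h2 : (cand G S (l ++ [w])).Nonempty := by
    have := cand_seq (d := d) hv hconn (n := n + 1) (by omega)
    rwa [hl'] at this
  have hsmem := (mem_cand G S).1 (nxt_spec G d v S h2).1
  have hwadj : ∃ y ∈ l, G.Adj y w := nxt_adj hv hconn (by omega)
  have hkn : kseq G d v S n = key G d l w := rfl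
  have hkn1 : kseq G d v S (n + 1) = key G d (l ++ [w]) s := by
    rw [kseq, hl']
  by_cases hc : ∃ y ∈ l, G.Adj y s
  · have hscand : s ∈ cand G S l := by
      refine (mem_cand G S).2 ⟨hsmem.1, ?_, hc⟩
      intro hmem
      exact hsmem.2.1 (List.mem_toFinset.2 (List.mem_append_left _ (List.mem_toFinset.1 hmem)))
    have hmin : key G d l w ≤ key G d l s := (nxt_spec G d v S h1).2 s hscand
    have hne : key G d l w ≠ key G d l s := by
      intro heq
      have : w = s := key_inj G hd hwadj hc heq
      apply hsmem.2.1
      simp only [List.mem_toFinset, List.mem_append, List.mem_singleton]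
      exact Or.inr this.symm
    rw [hkn, hkn1, key_append G d [w] hc]
    omega
  · have hppl : List.findIdx (fun y => decide (G.Adj y s)) l = l.length := by
      rw [List.findIdx_eq_length]
      intro x hx
      simp only [decide_eq_false_iff_not]
      exact fun hadj => hc ⟨x, hx, hadj⟩
    have hws : G.Adj w s := by
      obtain ⟨y, hy, hadj⟩ := hsmem.2.2
      rcases List.mem_append.1 hy with hy | hy
      · exact absurd ⟨y, hy, hadj⟩ hc
      · rw [List.mem_singleton] at hy; rwa [← hy]
    have hpp' : pp G (l ++ [w]) s = l.length := by
      rw [pp, List.findIdx_append, if_neg (by rw [hppl]; omega)]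
      simp [hppl, List.findIdx_cons, hws]
    have hlen : l.length = n + 1 := length_seq G d v S n
    have hidxw : (nbrs G (l.getD (pp G l w) w)).idxOf w < d := idx_lt G hd hwadj
    have hppw : pp G l w < l.length := pp_lt G hwadj
    rw [hkn, hkn1, key, key, hpp']
    have h1' : pp G l w * d + (nbrs G (l.getD (pp G l w) w)).idxOf w < (pp G l w + 1) * d := by
      nlinarith
    have h2' : (pp G l w + 1) * d ≤ l.length * d := by
      apply Nat.mul_le_mul_right
      omega
    omega

lemma kseq_mono : ∀ j, ∀ i, i < j → j + 2 ≤ S.card → kseq G d v S i < kseq G d v S j := by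
  intro j
  induction j with
  | zero => omega
  | succ j ih =>
    intro i hij hcard
    rcases Nat.lt_succ_iff_lt_or_eq.1 hij with h | h
    · exact (ih i h (by omega)).trans (kseq_succ hv hconn hd (by omega))
    · rw [h]; exact kseq_succ hv hconn hd (by omega)

end enc3
section enc4
variable {V : Type*} [Fintype V] [LinearOrder V] (G : SimpleGraph V) [DecidableRel G.Adj]
  (d : ℕ) (v : V)

noncomputable def dec (as : List ℕ) : List V :=
  as.foldl (fun m a => m ++ [(nbrs G (m.getD (a / d) v)).getD (a % d) v]) [v]

lemma dec_append (as : List ℕ) (a : ℕ) :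
    dec G d v (as ++ [a]) =
      dec G d v as ++ [(nbrs G ((dec G d v as).getD (a / d) v)).getD (a % d) v] := by
  rw [dec, List.foldl_append]
  rfl

variable (S : Finset V)
variable {G d v S}
variable (hv : v ∈ S) (hconn : (G.induce (S : Set V)).Connected) (hd : ∀ w, G.degree w ≤ d)

include hv hconn hd

lemma dec_keys : ∀ n, n + 1 ≤ S.card →
    dec G d v ((List.range n).map (kseq G d v S)) = seq G d v S n := by
  intro n
  induction n with
  | zero => intro _; rfl
  | succ n ih =>
    intro hcard
    rw [List.range_succ, List.map_append, List.map_singleton, dec_append, ih (by omega)]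
    show _ = seq G d v S n ++ [nxt G d v S (seq G d v S n)]
    congr 1
    set l := seq G d v S n with hl
    set w := nxt G d v S l with hw
    have hwadj : ∃ y ∈ l, G.Adj y w := nxt_adj hv hconn (by omega)
    have hplt : pp G l w < l.length := pp_lt G hwadj
    have hidx : (nbrs G (l.getD (pp G l w) w)).idxOf w < d := idx_lt G hd hwadj
    have hd0 : 0 < d := lt_of_le_of_lt (Nat.zero_le _) hidx
    have hdiv : kseq G d v S n / d = pp G l w := by
      rw [kseq, key, mul_comm, Nat.mul_add_div hd0, Nat.div_eq_of_lt hidx, add_zero]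
    have hmod : kseq G d v S n % d = (nbrs G (l.getD (pp G l w) w)).idxOf w := by
      rw [kseq, key, add_comm, Nat.add_mul_mod_self_right, Nat.mod_eq_of_lt hidx]
    rw [hdiv, hmod]
    have hgd : l.getD (pp G l w) v = l.getD (pp G l w) w := by
      rw [List.getD_eq_getElem _ _ hplt, List.getD_eq_getElem _ _ hplt]
    rw [hgd]
    have hmem : w ∈ nbrs G (l.getD (pp G l w) w) := (mem_nbrs G).2 (adj_parent G hwadj)
    have hlt := List.idxOf_lt_length_iff.2 hmem
    rw [List.getD_eq_getElem _ _ hlt, List.getElem_idxOf hlt]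

end enc4
section enc5
variable {V : Type*} [Fintype V] [LinearOrder V] {G : SimpleGraph V} [DecidableRel G.Adj]
  {d : ℕ} {v : V} {S : Finset V}
variable (hv : v ∈ S) (hconn : (G.induce (S : Set V)).Connected) (hd : ∀ w, G.degree w ≤ d)

include hv hconn hd

lemma keysList_pairwise {m : ℕ} (hcard : S.card = m + 1) :
    ((List.range m).map (kseq G d v S)).Pairwise (· < ·) := by
  rw [List.pairwise_iff_getElem]
  intro i j hi hj hij
  rw [List.length_map, List.length_range] at hi hj
  rw [List.getElem_map, List.getElem_range, List.getElem_map, List.getElem_range]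
  exact kseq_mono hv hconn hd j i hij (by omega)

lemma kseq_bound {m : ℕ} (hcard : S.card = m + 1) {i : ℕ} (him : i < m) :
    kseq G d v S i < d * m := by
  have hwadj : ∃ y ∈ seq G d v S i, G.Adj y (nxt G d v S (seq G d v S i)) :=
    nxt_adj hv hconn (by omega)
  have hplt := pp_lt G hwadj
  rw [length_seq] at hplt
  have hidx := idx_lt G hd hwadj
  calc kseq G d v S i < (pp G (seq G d v S i) (nxt G d v S (seq G d v S i)) + 1) * d := by
        rw [kseq, key]; nlinarith
    _ ≤ m * d := Nat.mul_le_mul_right d (by omega)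
    _ = d * m := mul_comm _ _

lemma seq_toFinset_eq {m : ℕ} (hcard : S.card = m + 1) :
    (seq G d v S m).toFinset = S := by
  have inv := seq_invariant G d v S hv hconn m (by omega)
  have hc : (seq G d v S m).toFinset.card = m + 1 := by
    rw [List.card_toFinset, inv.nodup.dedup, length_seq]
  exact Finset.eq_of_subset_of_card_le inv.subset (by omega)

lemma recover {m : ℕ} (hcard : S.card = m + 1) :
    dec G d v (Finset.sort ((List.range m).map (kseq G d v S)).toFinset (· ≤ ·))
      = seq G d v S m := by
  have hpair := keysList_pairwise hv hconn hd hcard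
  have hnodup : ((List.range m).map (kseq G d v S)).Nodup :=
    hpair.imp ne_of_lt
  have hsorted : ((List.range m).map (kseq G d v S)).Pairwise (· ≤ ·) :=
    hpair.imp le_of_lt
  rw [(List.toFinset_sort (· ≤ ·) hnodup).2 hsorted]
  exact dec_keys hv hconn hd m (by omega)

end enc5

/-- In a graph with all degrees at most `d`, the number of connected vertex sets of size `u`
containing a specified vertex `v` is at most `(e·d)^(u-1)`. -/
theorem stmt_3 {V : Type*} [Fintype V] (G : SimpleGraph V) [DecidableRel G.Adj]
    (d u : ℕ) (hu : 1 ≤ u) (hd : ∀ v : V, G.degree v ≤ d) (v : V) :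
    ({S : Finset V | v ∈ S ∧ S.card = u ∧ (G.induce (S : Set V)).Connected}.ncard : ℝ) ≤
      (Real.exp 1 * d) ^ (u - 1) := by
  classical
  letI : LinearOrder V := LinearOrder.lift' (Fintype.equivFin V) (Fintype.equivFin V).injective
  set m := u - 1 with hm
  have hum : u = m + 1 := by omega
  have hcount : ({S : Finset V | v ∈ S ∧ S.card = u ∧ (G.induce (S : Set V)).Connected}.ncard : ℝ)
      ≤ (((d * m).choose m : ℕ) : ℝ) := by
    have hle : {S : Finset V | v ∈ S ∧ S.card = u ∧ (G.induce (S : Set V)).Connected}.ncard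
        ≤ ((Finset.powersetCard m (Finset.range (d * m)) : Finset (Finset ℕ)) : Set (Finset ℕ)).ncard := by
      apply Set.ncard_le_ncard_of_injOn
        (fun S => ((List.range m).map (kseq G d v S)).toFinset)
      · rintro S ⟨hvS, hcard, hconn⟩
        rw [hum] at hcard
        have hpair := keysList_pairwise hvS hconn hd hcard
        have hnodup : ((List.range m).map (kseq G d v S)).Nodup := hpair.imp ne_of_lt
        rw [Finset.mem_coe, Finset.mem_powersetCard]
        constructor
        · intro x hx
          simp only [List.mem_toFinset, List.mem_map, List.mem_range] at hx
          obtain ⟨i, him, rfl⟩ := hx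
          exact Finset.mem_range.2 (kseq_bound hvS hconn hd hcard him)
        · rw [List.card_toFinset, hnodup.dedup, List.length_map, List.length_range]
      · rintro S₁ ⟨hvS₁, hcard₁, hconn₁⟩ S₂ ⟨hvS₂, hcard₂, hconn₂⟩ heq
        simp only at heq
        rw [hum] at hcard₁ hcard₂
        have h₁ := recover hvS₁ hconn₁ hd hcard₁
        have h₂ := recover hvS₂ hconn₂ hd hcard₂
        rw [heq] at h₁
        have : seq G d v S₁ m = seq G d v S₂ m := by rw [← h₁, ← h₂]
        rw [← seq_toFinset_eq hvS₁ hconn₁ hd hcard₁,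
          ← seq_toFinset_eq hvS₂ hconn₂ hd hcard₂, this]
    have : ((Finset.powersetCard m (Finset.range (d * m)) : Finset (Finset ℕ)) : Set (Finset ℕ)).ncard
        = (d * m).choose m := by
      rw [Set.ncard_coe_finset, Finset.card_powersetCard, Finset.card_range]
    rw [this] at hle
    exact_mod_cast hle
  calc _ ≤ (((d * m).choose m : ℕ) : ℝ) := hcount
    _ ≤ (Real.exp 1 * d) ^ m := numeric_bound d m
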